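/- Let k ≥ 4 be an integer and q ∈ (q_k, 2). Then the thickness of the compact set π_q(S_k) satisfies τ(π_q(S_k)) > q^{k−3}. -/

import Mathlib

open Set

/-- Projection map: the value of the (0-indexed) digit sequence `a` in base `q`,
`π_q(a) = Σ_{j=0}^∞ a_j q^{-(j+1)}`. -/
noncomputable def piQ (q : ℝ) (a : ℕ → ℝ) : ℝ := ∑' j : ℕ, a j / q ^ (j + 1)

/-- `a` is a sequence of digits in `{0,1}`. -/
def IsDigitSeq (a : ℕ → ℝ) : Prop := ∀ j, a j = 0 ∨ a j = 1

/-- `a` is a sequence of digits in `{-1,0,1}`. -/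
def IsExtDigitSeq (a : ℕ → ℝ) : Prop := ∀ j, a j = -1 ∨ a j = 0 ∨ a j = 1

/-- The set of base-`q` expansions of `x`. -/
def SigmaSet (q x : ℝ) : Set (ℕ → ℝ) := {a | IsDigitSeq a ∧ piQ q a = x}

/-- The interval `I_q = [0, 1/(q-1)]`. -/
def Iq (q : ℝ) : Set ℝ := Set.Icc 0 (1 / (q - 1))

/-- The switch region `J_q = [1/q, 1/(q(q-1))]`. -/
def Jq (q : ℝ) : Set ℝ := Set.Icc (1 / q) (1 / (q * (q - 1)))

/-- The set of points of `I_q` having exactly `m` base-`q` expansions. -/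
def UqM (q : ℝ) (m : ℕ∞) : Set ℝ := {x | x ∈ Iq q ∧ (SigmaSet q x).encard = m}

/-- The set of points of `I_q` having a unique base-`q` expansion. -/
def Uq (q : ℝ) : Set ℝ := UqM q 1

/-- `B_m`: the set of bases `q ∈ (1,2)` for which some point has exactly `m` expansions. -/
def Bset (m : ℕ∞) : Set ℝ := {q | q ∈ Set.Ioo (1 : ℝ) 2 ∧ (UqM q m).Nonempty}

/-- `x` is the `k`-Bonacci number: the root in `(1,2)` of `x^k = x^{k-1} + ⋯ + x + 1`. -/
def IsBonacci (k : ℕ) (x : ℝ) : Prop :=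
  x ∈ Set.Ioo (1 : ℝ) 2 ∧ x ^ k = ∑ i ∈ Finset.range k, x ^ i

/-- `a` contains no occurrence of the word `01^k` as a consecutive block. -/
def AvoidsWord01 (k : ℕ) (a : ℕ → ℝ) : Prop :=
  ∀ i, ¬(a i = 0 ∧ ∀ j, 1 ≤ j → j ≤ k → a (i + j) = 1)

/-- `a` contains no occurrence of the word `10^k` as a consecutive block. -/
def AvoidsWord10 (k : ℕ) (a : ℕ → ℝ) : Prop :=
  ∀ i, ¬(a i = 1 ∧ ∀ j, 1 ≤ j → j ≤ k → a (i + j) = 0)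

/-- `S_k`: the set of `{0,1}`-sequences avoiding the words `01^k` and `10^k`. -/
def Sset (k : ℕ) : Set (ℕ → ℝ) := {a | IsDigitSeq a ∧ AvoidsWord01 k a ∧ AvoidsWord10 k a}

/-- `g_{q,k} = f_1^{-(k-1)} ∘ f_0^{-1}`, where `f_0^{-1}(y) = y/q` and `f_1^{-1}(y) = (y+1)/q`. -/
noncomputable def gMap (q : ℝ) (k : ℕ) (x : ℝ) : ℝ := (fun y => (y + 1) / q)^[k - 1] (x / q)

/-- The maps `f_0(x) = qx` (for `b = false`) and `f_1(x) = qx - 1` (for `b = true`). -/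
noncomputable def fDigit (q : ℝ) (b : Bool) (x : ℝ) : ℝ := if b then q * x - 1 else q * x

/-- `(a, b)` is a bounded gap of `C`: a bounded connected component of `ℝ \ C`. -/
def IsGap (C : Set ℝ) (a b : ℝ) : Prop :=
  a < b ∧ a ∈ C ∧ b ∈ C ∧ Set.Ioo a b ∩ C = ∅

/-- The left endpoint of the bridge of `C` lying immediately to the left of the gap `(a, b)`:
the right endpoint of the nearest gap to the left having diameter at least `b - a`
(or `min C` if there is no such gap). -/
noncomputable def leftBridgeStart (C : Set ℝ) (a b : ℝ) : ℝ :=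
  sSup ({sInf C} ∪ {d | ∃ c, IsGap C c d ∧ d ≤ a ∧ b - a ≤ d - c})

/-- The right endpoint of the bridge of `C` lying immediately to the right of the gap `(a, b)`. -/
noncomputable def rightBridgeEnd (C : Set ℝ) (a b : ℝ) : ℝ :=
  sInf ({sSup C} ∪ {c | ∃ d, IsGap C c d ∧ b ≤ c ∧ b - a ≤ d - c})

/-- The (Newhouse) thickness of a compact set `C ⊆ ℝ`: the infimum over all bounded gaps `G`
of the ratio of the length of the bridge on either side of `G` to the length of `G`
(`∞` if `C` has no bounded gap). -/
noncomputable def thickness (C : Set ℝ) : ENNReal :=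
  ⨅ p : {p : ℝ × ℝ // IsGap C p.1 p.2},
    ENNReal.ofReal
      (min ((p.1.1 - leftBridgeStart C p.1.1 p.1.2) / (p.1.2 - p.1.1))
        ((rightBridgeEnd C p.1.1 p.1.2 - p.1.2) / (p.1.2 - p.1.1)))

/-- `B` is contained in a gap of `A`, i.e. in a connected component of `ℝ \ A`. -/
def ContainedInGap (B A : Set ℝ) : Prop :=
  ∃ x ∈ Aᶜ, B ⊆ connectedComponentIn Aᶜ x

/-- Two sets are interleaved if neither is contained in a gap of the other. -/
def Interleaved (A B : Set ℝ) : Prop :=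
  ¬ContainedInGap B A ∧ ¬ContainedInGap A B

/-- `A` and `B` are `ε`-strongly interleaved: any compact sets within Hausdorff distance `ε`
of `A` and `B` respectively are interleaved. -/
def StronglyInterleaved (ε : ℝ) (A B : Set ℝ) : Prop :=
  ∀ A' B' : Set ℝ, IsCompact A' → IsCompact B' →
    EMetric.hausdorffEdist A A' ≤ ENNReal.ofReal ε →
    EMetric.hausdorffEdist B B' ≤ ENNReal.ofReal ε → Interleaved A' B'

/-- The sequence `0^{k-3}(01^{k-1})^∞` (0-indexed). -/
noncomputable def seqG (k : ℕ) : ℕ → ℝ := fun j =>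
  if j < k - 3 then 0 else if (j - (k - 3)) % k = 0 then 0 else 1

/-- The sequence `1^{k-3}(10^{k-1})^∞` (0-indexed). -/
noncomputable def seqH (k : ℕ) : ℕ → ℝ := fun j =>
  if j < k - 3 then 1 else if (j - (k - 3)) % k = 0 then 1 else 0

/-- The sequence `(1^{k-1}0)^∞` (0-indexed). -/
noncomputable def seqP (k : ℕ) : ℕ → ℝ := fun j => if j % k = k - 1 then 0 else 1



namespace ThickAux
open Finset
variable {q : ℝ} {k : ℕ}

lemma digit_nonneg {a : ℕ → ℝ} (h : IsDigitSeq a) (j : ℕ) : 0 ≤ a j := by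
  rcases h j with h' | h' <;> simp [h']

lemma digit_le_one {a : ℕ → ℝ} (h : IsDigitSeq a) (j : ℕ) : a j ≤ 1 := by
  rcases h j with h' | h' <;> simp [h']

lemma digit_eq_one {a : ℕ → ℝ} (h : IsDigitSeq a) {j : ℕ} (h0 : a j ≠ 0) : a j = 1 := by
  rcases h j with h' | h' <;> simp [h'] at h0 ⊢

lemma digit_eq_zero {a : ℕ → ℝ} (h : IsDigitSeq a) {j : ℕ} (h0 : a j ≠ 1) : a j = 0 := by
  rcases h j with h' | h' <;> simp [h'] at h0 ⊢

lemma summable_geom_inv (hq : 1 < q) : Summable (fun j : ℕ => (1 / q) ^ j) := by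
  have hq0 : 0 < q := lt_trans one_pos hq
  exact summable_geometric_of_lt_one (by positivity) (by rw [div_lt_one hq0]; exact hq)

lemma summable_digit (hq : 1 < q) {a : ℕ → ℝ} (h0 : ∀ j, 0 ≤ a j) (h1 : ∀ j, a j ≤ 1) :
    Summable (fun j => a j / q ^ (j + 1)) := by
  have hq0 : 0 < q := lt_trans one_pos hq
  have hs : Summable (fun j : ℕ => (1 / q) ^ (j + 1)) := by
    have := (summable_geom_inv hq).mul_left (1 / q)
    exact this.congr (fun j => by ring)
  apply Summable.of_nonneg_of_le (fun j => div_nonneg (h0 j) (by positivity)) (fun j => ?_) hs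
  rw [div_pow, one_pow]
  exact div_le_div_of_nonneg_right (h1 j) (by positivity)


lemma summable_digit' (hq : 1 < q) {a : ℕ → ℝ} (h : IsDigitSeq a) :
    Summable (fun j => a j / q ^ (j + 1)) :=
  summable_digit hq (digit_nonneg h) (digit_le_one h)

noncomputable def pat0 (k : ℕ) : ℕ → ℝ := fun m => if m % k = 0 then 0 else 1

noncomputable def pat1 (k : ℕ) : ℕ → ℝ := fun m => if m % k = 0 then 1 else 0

lemma pat0_digit : IsDigitSeq (pat0 k) := fun j => by unfold pat0; split <;> simp

lemma pat1_digit : IsDigitSeq (pat1 k) := fun j => by unfold pat1; split <;> simp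

lemma piQ_split (hq : 1 < q) {a : ℕ → ℝ} (h : IsDigitSeq a) (i : ℕ) :
    piQ q a = (∑ j ∈ range i, a j / q ^ (j + 1)) + ∑' m, a (m + i) / q ^ (m + i + 1) :=
  ((summable_digit' hq h).sum_add_tsum_nat_add i).symm

lemma piQ_pat1 (hq : 1 < q) (hk : 1 ≤ k) : piQ q (pat1 k) * ((q ^ k - 1) * q) = q ^ k := by
  have hq0 : 0 < q := lt_trans one_pos hq
  have hk0 : k ≠ 0 := by omega
  have hgl : (1/q)^k < 1 := by
    apply pow_lt_one₀ (by positivity) (by rw [div_lt_one hq0]; exact hq) hk0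
  have hinj : Function.Injective (fun j : ℕ => j * k) := fun a b h => by
    simpa [Nat.mul_left_inj hk0] using h
  have hsupp : Function.support (fun m : ℕ => pat1 k m / q ^ (m + 1)) ⊆ Set.range (fun j : ℕ => j * k) := by
    intro m hm
    simp only [Function.mem_support] at hm
    by_cases h : m % k = 0
    · exact ⟨m / k, by simpa [Nat.div_mul_cancel (Nat.dvd_of_mod_eq_zero h)]⟩
    · exfalso; apply hm; simp [pat1, h]
  have := Function.Injective.tsum_eq hinj (f := fun m : ℕ => pat1 k m / q ^ (m + 1)) hsupp
  rw [piQ, ← this]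
  have : (fun j : ℕ => pat1 k (j * k) / q ^ (j * k + 1)) = fun j : ℕ => (1/q) * ((1/q)^k) ^ j := by
    funext j
    have : (j * k) % k = 0 := by simp [Nat.mul_mod_left]
    simp only [pat1, this, if_pos]
    rw [← pow_mul, mul_comm k j]
    rw [div_pow, one_pow, pow_add]
    field_simp
  rw [this, tsum_mul_left, tsum_geometric_of_lt_one (by positivity) hgl]
  have h1 : (1 : ℝ) - (1/q)^k = (q^k - 1)/q^k := by
    field_simp
    rw [sub_mul, one_mul, div_pow, one_pow, one_div_mul_cancel (by positivity)]
  rw [h1]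
  have hqk : (0:ℝ) < q ^ k := by positivity
  have hE : q ^ k - 1 > 0 := by
    have := one_lt_pow₀ hq hk0
    linarith
  field_simp

/-- total geometric: piQ of all-ones -/

lemma piQ_ones (hq : 1 < q) : (∑' j : ℕ, (1:ℝ) / q ^ (j + 1)) = 1 / (q - 1) := by
  have hq0 : 0 < q := lt_trans one_pos hq
  have hgl : (1/q) < 1 := by rw [div_lt_one hq0]; exact hq
  have : (fun j : ℕ => (1:ℝ) / q ^ (j+1)) = fun j : ℕ => (1/q) * (1/q)^j := by
    funext j; rw [pow_add]; field_simp; rw [← mul_pow, mul_one_div_cancel hq0.ne', one_pow]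
  rw [this, tsum_mul_left, tsum_geometric_of_lt_one (by positivity) hgl]
  have : (1:ℝ) - 1/q = (q-1)/q := by field_simp
  rw [this]
  field_simp

/-- pat0 + pat1 = ones -/

lemma piQ_pat0_add (hq : 1 < q) (hk : 1 ≤ k) : piQ q (pat0 k) + piQ q (pat1 k) = 1 / (q - 1) := by
  have s0 := summable_digit' hq (pat0_digit (k := k))
  have s1 := summable_digit' hq (pat1_digit (k := k))
  have : piQ q (pat0 k) + piQ q (pat1 k) = ∑' j : ℕ, (1:ℝ) / q ^ (j+1) := by
    rw [piQ, piQ, ← s0.tsum_add s1]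
    congr 1 with j
    rw [← add_div]
    congr 1
    unfold pat0 pat1
    split <;> norm_num
  rw [this, piQ_ones hq]

lemma piQ_nonneg (hq : 1 < q) {a : ℕ → ℝ} (h : IsDigitSeq a) : 0 ≤ piQ q a := by
  have hq0 : 0 < q := lt_trans one_pos hq
  exact tsum_nonneg (fun j => div_nonneg (digit_nonneg h j) (by positivity))

lemma piQ_le_hull (hq : 1 < q) {a : ℕ → ℝ} (h : IsDigitSeq a) : piQ q a ≤ 1 / (q - 1) := by
  have hq0 : 0 < q := lt_trans one_pos hq
  rw [← piQ_ones hq]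
  apply Summable.tsum_le_tsum ?_ (summable_digit' hq h) ?_
  · intro j
    apply div_le_div_of_nonneg_right (digit_le_one h j) (by positivity)
  · exact summable_digit' hq (fun j => Or.inr rfl)


lemma exists_zero_window (hk1 : 1 ≤ k) {a : ℕ → ℝ} (hd : IsDigitSeq a)
    (hav : AvoidsWord01 k a) {i p : ℕ} (hai : a i = 0) (hp : i < p) :
    ∃ r, r < k ∧ a (p + r) = 0 := by
  classical
  by_contra hcon
  push_neg at hcon
  have hall : ∀ r, r < k → a (p + r) = 1 := fun r hr => digit_eq_one hd (hcon r hr)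
  let P : ℕ → Prop := fun t => a t = 0
  set n := p - 1 with hn
  have hip : i ≤ n := by omega
  set t0 := Nat.findGreatest P n with ht0
  have hPt0 : P t0 := Nat.findGreatest_spec (P := P) hip hai
  have ht0n : t0 ≤ n := Nat.findGreatest_le n
  apply hav t0
  refine ⟨hPt0, fun j hj1 hjk => ?_⟩
  by_cases hcase : t0 + j ≤ n
  · exact digit_eq_one hd (Nat.findGreatest_is_greatest (P := P) (by omega) hcase)
  · have hge : p ≤ t0 + j := by omega
    have : t0 + j = p + (t0 + j - p) := by omega
    rw [this]
    exact hall _ (by omega)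

lemma exists_one_window (hk1 : 1 ≤ k) {a : ℕ → ℝ} (hd : IsDigitSeq a)
    (hav : AvoidsWord10 k a) {i p : ℕ} (hai : a i = 1) (hp : i < p) :
    ∃ r, r < k ∧ a (p + r) = 1 := by
  classical
  by_contra hcon
  push_neg at hcon
  have hall : ∀ r, r < k → a (p + r) = 0 := fun r hr => digit_eq_zero hd (hcon r hr)
  let P : ℕ → Prop := fun t => a t = 1
  set n := p - 1 with hn
  have hip : i ≤ n := by omega
  set t0 := Nat.findGreatest P n with ht0
  have hPt0 : P t0 := Nat.findGreatest_spec (P := P) hip hai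
  have ht0n : t0 ≤ n := Nat.findGreatest_le n
  apply hav t0
  refine ⟨hPt0, fun j hj1 hjk => ?_⟩
  by_cases hcase : t0 + j ≤ n
  · exact digit_eq_zero hd (Nat.findGreatest_is_greatest (P := P) (by omega) hcase)
  · have : t0 + j = p + (t0 + j - p) := by omega
    rw [this]
    exact hall _ (by omega)

lemma block_le (hq : 1 < q) (hk1 : 1 ≤ k) {t : ℕ → ℝ} (hd : IsDigitSeq t) {p m0 m1 : ℕ}
    (hm0 : m0 ∈ Finset.Ico p (p + k)) (hm1 : m1 ∈ Finset.Ico p (p + k))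
    (hle : m0 ≤ m1) (ht0 : t m0 = 0) {g : ℕ → ℝ} (hg1 : ∀ m ∈ Finset.Ico p (p+k), m ≠ m1 → g m = 1)
    (hg0 : g m1 = 0) :
    ∑ m ∈ Finset.Ico p (p + k), t m / q ^ (m + 1) ≤ ∑ m ∈ Finset.Ico p (p + k), g m / q ^ (m + 1) := by
  have hq0 : 0 < q := lt_trans one_pos hq
  have w_pos : ∀ m : ℕ, (0:ℝ) < 1 / q ^ (m+1) := fun m => by positivity
  have hsum_t : ∑ m ∈ Finset.Ico p (p + k), t m / q ^ (m + 1)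
      ≤ (∑ m ∈ Finset.Ico p (p + k), 1 / q ^ (m + 1)) - 1 / q ^ (m0 + 1) := by
    rw [← Finset.sum_erase_add _ _ hm0, ← Finset.sum_erase_add _ (fun m => 1 / q^(m+1)) hm0]
    have h1 : ∑ m ∈ (Finset.Ico p (p+k)).erase m0, t m / q ^ (m+1)
        ≤ ∑ m ∈ (Finset.Ico p (p+k)).erase m0, 1 / q ^ (m+1) := by
      apply Finset.sum_le_sum
      intro m _
      rw [div_le_div_iff₀ (by positivity) (by positivity)]
      have := digit_le_one hd m
      nlinarith [pow_pos hq0 (m+1)]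
    rw [ht0]
    simp only [zero_div]
    linarith
  have hsum_g : ∑ m ∈ Finset.Ico p (p + k), g m / q ^ (m + 1)
      = (∑ m ∈ Finset.Ico p (p + k), 1 / q ^ (m + 1)) - 1 / q ^ (m1 + 1) := by
    rw [← Finset.sum_erase_add _ _ hm1, ← Finset.sum_erase_add _ (fun m => 1 / q^(m+1)) hm1]
    rw [hg0]
    simp only [zero_div, add_zero]
    have : ∑ m ∈ (Finset.Ico p (p+k)).erase m1, g m / q ^ (m+1)
        = ∑ m ∈ (Finset.Ico p (p+k)).erase m1, 1 / q ^ (m+1) := by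
      apply Finset.sum_congr rfl
      intro m hm
      rw [hg1 m (Finset.mem_of_mem_erase hm) (Finset.ne_of_mem_erase hm)]
    rw [this]; ring
  have hw : 1 / q ^ (m1 + 1) ≤ 1 / q ^ (m0 + 1) := by
    apply div_le_div_of_nonneg_left one_pos.le (by positivity)
    exact pow_le_pow_right₀ hq.le (by omega)
  linarith

/-- mirrored: block sum of `t` at least single term at m1 weight -/

lemma block_ge (hq : 1 < q) (hk1 : 1 ≤ k) {t : ℕ → ℝ} (hd : IsDigitSeq t) {p m0 m1 : ℕ}
    (hm0 : m0 ∈ Finset.Ico p (p + k)) (hm1 : m1 ∈ Finset.Ico p (p + k))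
    (hle : m0 ≤ m1) (ht0 : t m0 = 1) {g : ℕ → ℝ} (hg1 : ∀ m ∈ Finset.Ico p (p+k), m ≠ m1 → g m = 0)
    (hg0 : g m1 = 1) :
    ∑ m ∈ Finset.Ico p (p + k), g m / q ^ (m + 1) ≤ ∑ m ∈ Finset.Ico p (p + k), t m / q ^ (m + 1) := by
  have hq0 : 0 < q := lt_trans one_pos hq
  have hsum_g : ∑ m ∈ Finset.Ico p (p + k), g m / q ^ (m + 1) = 1 / q ^ (m1 + 1) := by
    rw [← Finset.sum_erase_add _ _ hm1, hg0]
    have : ∑ m ∈ (Finset.Ico p (p+k)).erase m1, g m / q ^ (m+1) = 0 := by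
      apply Finset.sum_eq_zero
      intro m hm
      rw [hg1 m (Finset.mem_of_mem_erase hm) (Finset.ne_of_mem_erase hm)]
      simp
    rw [this]; ring
  have hsum_t : 1 / q ^ (m0 + 1) ≤ ∑ m ∈ Finset.Ico p (p + k), t m / q ^ (m + 1) := by
    have : t m0 / q ^ (m0 + 1) = 1 / q ^ (m0+1) := by rw [ht0]
    rw [← this]
    apply Finset.single_le_sum (fun m _ => div_nonneg (digit_nonneg hd m) (by positivity)) hm0
  have hw : 1 / q ^ (m1 + 1) ≤ 1 / q ^ (m0 + 1) := by
    apply div_le_div_of_nonneg_left one_pos.le (by positivity)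
    exact pow_le_pow_right₀ hq.le (by omega)
  linarith

lemma mult_in_block (hk1 : 1 ≤ k) {M m : ℕ} (h1 : M*k + 1 ≤ m) (h2 : m < M*k + 1 + k)
    (hmod : m % k = 0) : m = (M+1)*k := by
  obtain ⟨c, hc⟩ := Nat.dvd_of_mod_eq_zero hmod
  have hcge : M + 1 ≤ c := by
    by_contra h
    push_neg at h
    have : k * c ≤ k * M := Nat.mul_le_mul_left k (by omega)
    have : m ≤ k * M := le_trans (le_of_eq hc) this
    have hkM : k * M = M * k := Nat.mul_comm k M
    omega
  have hcle : c ≤ M + 1 := by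
    by_contra h
    push_neg at h
    have h1' : k * (M+2) ≤ k * c := Nat.mul_le_mul_left k (by omega)
    have : k * (M + 2) = M * k + k + k := by ring
    omega
  have : c = M + 1 := by omega
  rw [hc, this]; ring

lemma pat0_in_block (hk1 : 1 ≤ k) {M m : ℕ} (hm : m ∈ Finset.Ico (1 + M*k) (1 + M*k + k))
    (hne : m ≠ (M+1)*k) : pat0 k m = 1 := by
  simp only [Finset.mem_Ico] at hm
  unfold pat0
  rw [if_neg]
  intro hmod
  exact hne (mult_in_block hk1 (by omega) (by omega) hmod)

lemma pat1_in_block (hk1 : 1 ≤ k) {M m : ℕ} (hm : m ∈ Finset.Ico (1 + M*k) (1 + M*k + k))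
    (hne : m ≠ (M+1)*k) : pat1 k m = 0 := by
  simp only [Finset.mem_Ico] at hm
  unfold pat1
  rw [if_neg]
  intro hmod
  exact hne (mult_in_block hk1 (by omega) (by omega) hmod)

lemma m1_in_block (hk1 : 1 ≤ k) (M : ℕ) : (M+1)*k ∈ Finset.Ico (1 + M*k) (1 + M*k + k) := by
  simp only [Finset.mem_Ico]
  constructor
  · have : (M+1)*k = M*k + k := by ring
    omega
  · have : (M+1)*k = M*k + k := by ring
    omega

lemma tail_le_pat0 (hq : 1 < q) (hk1 : 1 ≤ k) {t : ℕ → ℝ} (hd : IsDigitSeq t) (ht0 : t 0 = 0)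
    (hwin : ∀ p, 1 ≤ p → ∃ r, r < k ∧ t (p + r) = 0) :
    ∑' m, t m / q ^ (m + 1) ≤ piQ q (pat0 k) := by
  have hq0 : 0 < q := lt_trans one_pos hq
  have key : ∀ M : ℕ, ∑ m ∈ range (1 + M*k), t m / q ^ (m+1)
      ≤ ∑ m ∈ range (1 + M*k), pat0 k m / q ^ (m+1) := by
    intro M
    induction M with
    | zero => simp [Finset.sum_range_one, ht0, pat0, Nat.zero_mod]
    | succ M ih =>
      have hsplit : (1 + (M+1)*k) = (1 + M*k) + k := by ring
      rw [hsplit]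
      rw [Finset.range_eq_Ico, ← Finset.sum_Ico_consecutive _ (Nat.zero_le _) (Nat.le_add_right _ _),
        ← Finset.sum_Ico_consecutive (fun m => pat0 k m / q^(m+1)) (Nat.zero_le (1 + M*k)) (Nat.le_add_right _ _)]
    -- goal: sum Ico 0 (1+Mk) + sum Ico (1+Mk) (1+Mk+k) ≤ same for pat0
      gcongr ?_ + ?_
      · rw [← Finset.range_eq_Ico] at *
        exact ih
      · obtain ⟨r0, hr0, htr0⟩ := hwin (1 + M*k) (by omega)
        refine block_le hq hk1 hd (p := 1 + M*k) (m0 := 1 + M*k + r0) (m1 := (M+1)*k)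
          ?_ (m1_in_block hk1 M) ?_ htr0 (fun m hm hne => pat0_in_block hk1 hm hne) ?_
        · simp only [Finset.mem_Ico]; omega
        · have : (M+1)*k = M*k + k := by ring
          omega
        · unfold pat0; rw [if_pos (Nat.mul_mod_left _ _)]
  apply Summable.tsum_le_of_sum_range_le (summable_digit' hq hd)
  intro N
  have hsub : ∑ m ∈ range N, t m / q ^ (m+1) ≤ ∑ m ∈ range (1 + N*k), t m / q ^ (m+1) := by
    apply Finset.sum_le_sum_of_subset_of_nonneg
    · apply Finset.range_subset_range.2
      calc N ≤ N * k := Nat.le_mul_of_pos_right N (by omega)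
      _ ≤ 1 + N * k := by omega
    · intro m _ _
      exact div_nonneg (digit_nonneg hd m) (by positivity)
  refine le_trans hsub (le_trans (key N) ?_)
  apply Summable.sum_le_tsum
  · intro m _
    exact div_nonneg (digit_nonneg (pat0_digit) m) (by positivity)
  · exact summable_digit' hq pat0_digit

lemma tail_ge_pat1 (hq : 1 < q) (hk1 : 1 ≤ k) {t : ℕ → ℝ} (hd : IsDigitSeq t) (ht0 : t 0 = 1)
    (hwin : ∀ p, 1 ≤ p → ∃ r, r < k ∧ t (p + r) = 1) :
    piQ q (pat1 k) ≤ ∑' m, t m / q ^ (m + 1) := by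
  have hq0 : 0 < q := lt_trans one_pos hq
  have key : ∀ M : ℕ, ∑ m ∈ range (1 + M*k), pat1 k m / q ^ (m+1)
      ≤ ∑ m ∈ range (1 + M*k), t m / q ^ (m+1) := by
    intro M
    induction M with
    | zero => simp [Finset.sum_range_one, ht0, pat1, Nat.zero_mod]
    | succ M ih =>
      have hsplit : (1 + (M+1)*k) = (1 + M*k) + k := by ring
      rw [hsplit]
      rw [Finset.range_eq_Ico, ← Finset.sum_Ico_consecutive _ (Nat.zero_le _) (Nat.le_add_right _ _),
        ← Finset.sum_Ico_consecutive (fun m => t m / q^(m+1)) (Nat.zero_le (1 + M*k)) (Nat.le_add_right _ _)]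
      gcongr ?_ + ?_
      · rw [← Finset.range_eq_Ico] at *
        exact ih
      · obtain ⟨r0, hr0, htr0⟩ := hwin (1 + M*k) (by omega)
        refine block_ge hq hk1 hd (p := 1 + M*k) (m0 := 1 + M*k + r0) (m1 := (M+1)*k)
          ?_ (m1_in_block hk1 M) ?_ htr0 (fun m hm hne => pat1_in_block hk1 hm hne) ?_
        · simp only [Finset.mem_Ico]; omega
        · have : (M+1)*k = M*k + k := by ring
          omega
        · unfold pat1; rw [if_pos (Nat.mul_mod_left _ _)]
  apply Summable.tsum_le_of_sum_range_le (summable_digit' hq pat1_digit)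
  intro N
  have hsub : ∑ m ∈ range N, pat1 k m / q ^ (m+1) ≤ ∑ m ∈ range (1 + N*k), pat1 k m / q ^ (m+1) := by
    apply Finset.sum_le_sum_of_subset_of_nonneg
    · apply Finset.range_subset_range.2
      calc N ≤ N * k := Nat.le_mul_of_pos_right N (by omega)
      _ ≤ 1 + N * k := by omega
    · intro m _ _
      exact div_nonneg (digit_nonneg (pat1_digit) m) (by positivity)
  refine le_trans hsub (le_trans (key N) ?_)
  apply Summable.sum_le_tsum
  · intro m _
    exact div_nonneg (digit_nonneg hd m) (by positivity)
  · exact summable_digit' hq hd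

noncomputable def splice (a : ℕ → ℝ) (s : ℕ) (p : ℕ → ℝ) : ℕ → ℝ :=
  fun j => if j < s then a j else p (j - s)

lemma splice_digit {a p : ℕ → ℝ} (ha : IsDigitSeq a) (hp : IsDigitSeq p) (s : ℕ) :
    IsDigitSeq (splice a s p) := fun j => by
  unfold splice; split
  · exact ha j
  · exact hp _

lemma splice_lt {a p : ℕ → ℝ} {s j : ℕ} (h : j < s) : splice a s p j = a j := if_pos h

lemma splice_ge {a p : ℕ → ℝ} {s j : ℕ} (h : s ≤ j) : splice a s p j = p (j - s) :=
  if_neg (not_lt.2 h)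

lemma splice_mem0 (hk2 : 2 ≤ k) {a : ℕ → ℝ} (ha : a ∈ Sset k) (s : ℕ)
    (hcond : a s = 0 ∨ (1 ≤ s ∧ a (s-1) = 1)) : splice a s (pat0 k) ∈ Sset k := by
  obtain ⟨hd, h01, h10⟩ := ha
  refine ⟨splice_digit hd pat0_digit s, ?_, ?_⟩
  · -- AvoidsWord01
    rintro i ⟨h0, hones⟩
    rcases lt_or_ge (i + k) s with hA | hA
    · exact h01 i ⟨by rw [← splice_lt (a := a) (p := pat0 k) (show i < s by omega)]; exact h0,
        fun j hj1 hjk => by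
        rw [← splice_lt (a := a) (p := pat0 k) (show i + j < s by omega)]; exact hones j hj1 hjk⟩
    · rcases le_or_gt s i with hB | hB
      · -- i ≥ s : pattern zone
        have hi0 : (i - s) % k = 0 := by
          have := splice_ge (a := a) (p := pat0 k) hB (j := i)
          rw [this] at h0
          by_contra hmod
          unfold pat0 at h0; rw [if_neg hmod] at h0; norm_num at h0
        have hik : (splice a s (pat0 k)) (i + k) = 0 := by
          rw [splice_ge (show s ≤ i + k by omega)]
          have : (i + k - s) = (i - s) + k := by omega
          rw [this]
          unfold pat0
          rw [if_pos (by rw [Nat.add_mod_right]; exact hi0)]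
        have := hones k (by omega) (le_refl k)
        rw [hik] at this; norm_num at this
      · -- i < s ≤ i + k : position s is 0
        have hj : (splice a s (pat0 k)) (i + (s - i)) = 1 := hones (s - i) (by omega) (by omega)
        have : i + (s - i) = s := by omega
        rw [this, splice_ge (le_refl s)] at hj
        simp only [Nat.sub_self] at hj
        unfold pat0 at hj
        rw [if_pos (Nat.zero_mod k)] at hj
        norm_num at hj
  · -- AvoidsWord10
    rintro i ⟨h1, hzeros⟩
    rcases lt_or_ge (i + k) s with hA | hA
    · exact h10 i ⟨by rw [← splice_lt (a := a) (p := pat0 k) (show i < s by omega)]; exact h1,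
        fun j hj1 hjk => by
        rw [← splice_lt (a := a) (p := pat0 k) (show i + j < s by omega)]; exact hzeros j hj1 hjk⟩
    · rcases le_or_gt s i with hB | hB
      · -- i ≥ s: two consecutive zeros in pattern impossible
        have e1 : (splice a s (pat0 k)) (i + 1) = 0 := hzeros 1 (le_refl 1) (by omega)
        have e2 : (splice a s (pat0 k)) (i + 2) = 0 := hzeros 2 (by omega) (by omega)
        rw [splice_ge (show s ≤ i + 1 by omega)] at e1
        rw [splice_ge (show s ≤ i + 2 by omega)] at e2
        have m1 : (i + 1 - s) % k = 0 := by
          by_contra hmod; unfold pat0 at e1; rw [if_neg hmod] at e1; norm_num at e1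
        have m2 : (i + 2 - s) % k = 0 := by
          by_contra hmod; unfold pat0 at e2; rw [if_neg hmod] at e2; norm_num at e2
        have d1 := Nat.dvd_of_mod_eq_zero m1
        have d2 := Nat.dvd_of_mod_eq_zero m2
        have hdd : k ∣ (i + 2 - s) - (i + 1 - s) := Nat.dvd_sub d2 d1
        rw [show (i + 2 - s) - (i + 1 - s) = 1 by omega] at hdd
        have := Nat.le_of_dvd one_pos hdd
        omega
      · -- i < s ≤ i + k
        rcases lt_or_eq_of_le hA with hA' | hA'
        · -- s < i + k : position s+1 in window is 1
          have hj : (splice a s (pat0 k)) (i + (s + 1 - i)) = 0 := hzeros (s + 1 - i) (by omega) (by omega)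
          have : i + (s + 1 - i) = s + 1 := by omega
          rw [this, splice_ge (by omega)] at hj
          have : s + 1 - s = 1 := by omega
          rw [this] at hj
          unfold pat0 at hj
          rw [if_neg (by rw [Nat.mod_eq_of_lt (by omega)]; omega)] at hj
          norm_num at hj
        · -- s = i + k exactly
          rcases hcond with hc0 | ⟨hs1, hc1⟩
          · -- a s = 0 : occurrence lies in a
            apply h10 i
            refine ⟨by rw [← splice_lt (a := a) (p := pat0 k) hB]; exact h1, fun j hj1 hjk => ?_⟩
            rcases lt_or_eq_of_le hjk with hjk' | hjk'
            · rw [← splice_lt (a := a) (p := pat0 k) (show i + j < s by omega)]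
              exact hzeros j hj1 hjk
            · rw [hjk', show i + k = s by omega]
              exact hc0
          · -- a (s-1) = 1 contradicts required zero
            have hj : (splice a s (pat0 k)) (i + (s - 1 - i)) = 0 := hzeros (s - 1 - i) (by omega) (by omega)
            have : i + (s - 1 - i) = s - 1 := by omega
            rw [this, splice_lt (show s - 1 < s by omega)] at hj
            rw [hc1] at hj
            norm_num at hj

lemma splice_mem1 (hk2 : 2 ≤ k) {a : ℕ → ℝ} (ha : a ∈ Sset k) (s : ℕ)
    (hcond : a s = 1 ∨ (1 ≤ s ∧ a (s-1) = 0)) : splice a s (pat1 k) ∈ Sset k := by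
  obtain ⟨hd, h01, h10⟩ := ha
  refine ⟨splice_digit hd pat1_digit s, ?_, ?_⟩
  · -- AvoidsWord01
    rintro i ⟨h0, hones⟩
    rcases lt_or_ge (i + k) s with hA | hA
    · exact h01 i ⟨by rw [← splice_lt (a := a) (p := pat1 k) (show i < s by omega)]; exact h0,
        fun j hj1 hjk => by
        rw [← splice_lt (a := a) (p := pat1 k) (show i + j < s by omega)]; exact hones j hj1 hjk⟩
    · rcases le_or_gt s i with hB | hB
      · have e1 : (splice a s (pat1 k)) (i + 1) = 1 := hones 1 (le_refl 1) (by omega)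
        have e2 : (splice a s (pat1 k)) (i + 2) = 1 := hones 2 (by omega) (by omega)
        rw [splice_ge (show s ≤ i + 1 by omega)] at e1
        rw [splice_ge (show s ≤ i + 2 by omega)] at e2
        have m1 : (i + 1 - s) % k = 0 := by
          by_contra hmod; unfold pat1 at e1; rw [if_neg hmod] at e1; norm_num at e1
        have m2 : (i + 2 - s) % k = 0 := by
          by_contra hmod; unfold pat1 at e2; rw [if_neg hmod] at e2; norm_num at e2
        have d1 := Nat.dvd_of_mod_eq_zero m1
        have d2 := Nat.dvd_of_mod_eq_zero m2
        have hdd : k ∣ (i + 2 - s) - (i + 1 - s) := Nat.dvd_sub d2 d1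
        rw [show (i + 2 - s) - (i + 1 - s) = 1 by omega] at hdd
        have := Nat.le_of_dvd one_pos hdd
        omega
      · rcases lt_or_eq_of_le hA with hA' | hA'
        · have hj : (splice a s (pat1 k)) (i + (s + 1 - i)) = 1 := hones (s + 1 - i) (by omega) (by omega)
          have : i + (s + 1 - i) = s + 1 := by omega
          rw [this, splice_ge (by omega)] at hj
          have : s + 1 - s = 1 := by omega
          rw [this] at hj
          unfold pat1 at hj
          rw [if_neg (by rw [Nat.mod_eq_of_lt (by omega)]; omega)] at hj
          norm_num at hj
        · rcases hcond with hc0 | ⟨hs1, hc1⟩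
          · apply h01 i
            refine ⟨by rw [← splice_lt (a := a) (p := pat1 k) hB]; exact h0, fun j hj1 hjk => ?_⟩
            rcases lt_or_eq_of_le hjk with hjk' | hjk'
            · rw [← splice_lt (a := a) (p := pat1 k) (show i + j < s by omega)]
              exact hones j hj1 hjk
            · rw [hjk', show i + k = s by omega]
              exact hc0
          · have hj : (splice a s (pat1 k)) (i + (s - 1 - i)) = 1 := hones (s - 1 - i) (by omega) (by omega)
            have : i + (s - 1 - i) = s - 1 := by omega
            rw [this, splice_lt (show s - 1 < s by omega)] at hj
            rw [hc1] at hj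
            norm_num at hj
  · -- AvoidsWord10
    rintro i ⟨h1, hzeros⟩
    rcases lt_or_ge (i + k) s with hA | hA
    · exact h10 i ⟨by rw [← splice_lt (a := a) (p := pat1 k) (show i < s by omega)]; exact h1,
        fun j hj1 hjk => by
        rw [← splice_lt (a := a) (p := pat1 k) (show i + j < s by omega)]; exact hzeros j hj1 hjk⟩
    · rcases le_or_gt s i with hB | hB
      · have hi0 : (i - s) % k = 0 := by
          have := splice_ge (a := a) (p := pat1 k) hB (j := i)
          rw [this] at h1
          by_contra hmod
          unfold pat1 at h1; rw [if_neg hmod] at h1; norm_num at h1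
        have hik : (splice a s (pat1 k)) (i + k) = 1 := by
          rw [splice_ge (show s ≤ i + k by omega)]
          have : (i + k - s) = (i - s) + k := by omega
          rw [this]
          unfold pat1
          rw [if_pos (by rw [Nat.add_mod_right]; exact hi0)]
        have := hzeros k (by omega) (le_refl k)
        rw [hik] at this; norm_num at this
      · have hj : (splice a s (pat1 k)) (i + (s - i)) = 0 := hzeros (s - i) (by omega) (by omega)
        have : i + (s - i) = s := by omega
        rw [this, splice_ge (le_refl s)] at hj
        simp only [Nat.sub_self] at hj
        unfold pat1 at hj
        rw [if_pos (Nat.zero_mod k)] at hj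
        norm_num at hj

noncomputable def pref (q : ℝ) (a : ℕ → ℝ) (i : ℕ) : ℝ := ∑ j ∈ range i, a j / q ^ (j + 1)

lemma tail_shift_scale (hq : 1 < q) {t : ℕ → ℝ} (ht : IsDigitSeq t) (i : ℕ) :
    ∑' m, t m / q ^ (m + i + 1) = (1 / q ^ i) * ∑' m, t m / q ^ (m + 1) := by
  have hq0 : 0 < q := lt_trans one_pos hq
  rw [← tsum_mul_left]
  congr 1 with m
  rw [pow_add, pow_add]
  field_simp
  ring

lemma piQ_splice_eq (hq : 1 < q) {a p : ℕ → ℝ} (ha : IsDigitSeq a) (hp : IsDigitSeq p) (s : ℕ) :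
    piQ q (splice a s p) = pref q a s + (1 / q ^ s) * piQ q p := by
  rw [piQ_split hq (splice_digit ha hp s) s]
  congr 1
  · apply Finset.sum_congr rfl
    intro j hj
    rw [splice_lt (Finset.mem_range.1 hj)]
  · have h1 : ∀ m : ℕ, splice a s p (m + s) = p m := fun m => by
      rw [splice_ge (Nat.le_add_left s m)]
      congr 1
      omega
    calc ∑' m, splice a s p (m + s) / q ^ (m + s + 1)
        = ∑' m, p m / q ^ (m + s + 1) := by congr 1 with m; rw [h1]
      _ = (1 / q ^ s) * piQ q p := tail_shift_scale hq hp s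

lemma piQ_le_of_zero (hq : 1 < q) (hk1 : 1 ≤ k) {a : ℕ → ℝ} (ha : a ∈ Sset k) {i : ℕ}
    (hai : a i = 0) : piQ q a ≤ pref q a i + (1 / q ^ i) * piQ q (pat0 k) := by
  obtain ⟨hd, h01, _⟩ := ha
  rw [piQ_split hq hd i]
  unfold pref
  gcongr _ + ?_
  have hshift : ∑' m, a (m + i) / q ^ (m + i + 1)
      = (1 / q ^ i) * ∑' m, a (m + i) / q ^ (m + 1) := tail_shift_scale hq (fun m => hd (m+i)) i
  rw [hshift]
  have hq0 : 0 < q := lt_trans one_pos hq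
  have h2 : ∑' m, a (m + i) / q ^ (m + 1) ≤ piQ q (pat0 k) := by
    apply tail_le_pat0 hq hk1 (fun m => hd (m+i)) (by simpa using hai)
    intro p hp
    obtain ⟨r, hr, hzr⟩ := exists_zero_window hk1 hd h01 hai (show i < i + p by omega)
    exact ⟨r, hr, by rw [show p + r + i = i + p + r by omega]; exact hzr⟩
  have : (0:ℝ) ≤ 1 / q ^ i := by positivity
  exact mul_le_mul_of_nonneg_left h2 this

lemma piQ_ge_of_one (hq : 1 < q) (hk1 : 1 ≤ k) {a : ℕ → ℝ} (ha : a ∈ Sset k) {i : ℕ}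
    (hai : a i = 1) : pref q a i + (1 / q ^ i) * piQ q (pat1 k) ≤ piQ q a := by
  obtain ⟨hd, _, h10⟩ := ha
  rw [piQ_split hq hd i]
  unfold pref
  gcongr _ + ?_
  have hshift : ∑' m, a (m + i) / q ^ (m + i + 1)
      = (1 / q ^ i) * ∑' m, a (m + i) / q ^ (m + 1) := tail_shift_scale hq (fun m => hd (m+i)) i
  rw [hshift]
  have h2 : piQ q (pat1 k) ≤ ∑' m, a (m + i) / q ^ (m + 1) := by
    apply tail_ge_pat1 hq hk1 (fun m => hd (m+i)) (by simpa using hai)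
    intro p hp
    obtain ⟨r, hr, hzr⟩ := exists_one_window hk1 hd h10 hai (show i < i + p by omega)
    exact ⟨r, hr, by rw [show p + r + i = i + p + r by omega]; exact hzr⟩
  have : (0:ℝ) ≤ 1 / q ^ i := by positivity
  exact mul_le_mul_of_nonneg_left h2 this

lemma pref_congr {a b : ℕ → ℝ} (q : ℝ) {i : ℕ} (h : ∀ t, t < i → a t = b t) :
    pref q a i = pref q b i := by
  unfold pref
  exact Finset.sum_congr rfl fun t ht => by rw [h t (Finset.mem_range.1 ht)]

lemma pref_succ (q : ℝ) (a : ℕ → ℝ) (n : ℕ) :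
    pref q a (n+1) = pref q a n + a n / q ^ (n+1) := Finset.sum_range_succ _ _

lemma gap_classify (hq1 : 1 < q) (hk2 : 2 ≤ k)
    (h01 : piQ q (pat0 k) < piQ q (pat1 k))
    {c d : ℝ} (hgap : IsGap (piQ q '' Sset k) c d)
    {γ δ' : ℕ → ℝ} (hγ : γ ∈ Sset k) (hδ : δ' ∈ Sset k) (hc : piQ q γ = c) (hd : piQ q δ' = d) :
    ∃ m : ℕ, (∀ i, i < m → γ i = δ' i) ∧ γ m = 0 ∧ δ' m = 1 ∧
      c = pref q γ m + (1/q^m) * piQ q (pat0 k) ∧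
      d = pref q γ m + (1/q^m) * piQ q (pat1 k) := by
  classical
  have hk1 : 1 ≤ k := by omega
  obtain ⟨hcd, hcC, hdC, hIoo⟩ := hgap
  have hne : ∃ i, γ i ≠ δ' i := by
    by_contra hcon
    push_neg at hcon
    have : γ = δ' := funext hcon
    rw [this, hd] at hc
    linarith
  set m := Nat.find hne with hm
  have hdiff : γ m ≠ δ' m := Nat.find_spec hne
  have hagree : ∀ i, i < m → γ i = δ' i := fun i hi => by
    by_contra hcon
    exact absurd hi (not_lt.2 (Nat.find_le hcon))
  have hprefeq : pref q γ m = pref q δ' m := pref_congr q hagree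
  have hqm : (0:ℝ) < 1 / q ^ m := by positivity
  -- determine digits
  have hdig : γ m = 0 ∧ δ' m = 1 := by
    rcases hγ.1 m with hγ0 | hγ1
    · refine ⟨hγ0, ?_⟩
      by_contra hδ1
      have hδ0 : δ' m = 0 := digit_eq_zero hδ.1 hδ1
      exact hdiff (by rw [hγ0, hδ0])
    · exfalso
      have hδ0 : δ' m = 0 := by
        rcases hδ.1 m with h' | h'
        · exact h'
        · exact absurd (by rw [hγ1, h']) hdiff
      have h1 : pref q γ m + (1/q^m) * piQ q (pat1 k) ≤ c := by
        rw [← hc]; exact piQ_ge_of_one hq1 hk1 hγ hγ1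
      have h2 : d ≤ pref q δ' m + (1/q^m) * piQ q (pat0 k) := by
        rw [← hd]; exact piQ_le_of_zero hq1 hk1 hδ hδ0
      rw [← hprefeq] at h2
      nlinarith
  obtain ⟨hγm, hδm⟩ := hdig
  -- a* : the max point of the 0-branch
  set astar := piQ q (splice γ m (pat0 k)) with hastar
  have hastar_mem : astar ∈ piQ q '' Sset k := ⟨_, splice_mem0 hk2 hγ m (Or.inl hγm), rfl⟩
  have hastar_val : astar = pref q γ m + (1/q^m) * piQ q (pat0 k) :=
    piQ_splice_eq hq1 hγ.1 pat0_digit m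
  have hca : c ≤ astar := by
    rw [hastar_val, ← hc]; exact piQ_le_of_zero hq1 hk1 hγ hγm
  have had : astar < d := by
    have h2 : pref q δ' m + (1/q^m) * piQ q (pat1 k) ≤ d := by
      rw [← hd]; exact piQ_ge_of_one hq1 hk1 hδ hδm
    rw [← hprefeq] at h2
    rw [hastar_val]
    nlinarith
  have hceq : astar = c := by
    by_contra hne'
    have hlt : c < astar := lt_of_le_of_ne hca (Ne.symm hne')
    have : astar ∈ Set.Ioo c d ∩ piQ q '' Sset k := ⟨⟨hlt, had⟩, hastar_mem⟩
    rw [hIoo] at this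
    exact this
  -- b*
  set bstar := piQ q (splice δ' m (pat1 k)) with hbstar
  have hbstar_mem : bstar ∈ piQ q '' Sset k := ⟨_, splice_mem1 hk2 hδ m (Or.inl hδm), rfl⟩
  have hbstar_val : bstar = pref q γ m + (1/q^m) * piQ q (pat1 k) := by
    rw [hbstar, piQ_splice_eq hq1 hδ.1 pat1_digit m, hprefeq]
  have hbd : bstar ≤ d := by
    rw [hbstar_val, hprefeq, ← hd]; exact piQ_ge_of_one hq1 hk1 hδ hδm
  have hcb : c < bstar := by
    have h2 : c ≤ pref q γ m + (1/q^m) * piQ q (pat0 k) := by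
      rw [← hc]; exact piQ_le_of_zero hq1 hk1 hγ hγm
    rw [hbstar_val]
    nlinarith
  have hdeq : bstar = d := by
    by_contra hne'
    have hlt : bstar < d := lt_of_le_of_ne hbd hne'
    have : bstar ∈ Set.Ioo c d ∩ piQ q '' Sset k := ⟨⟨hcb, hlt⟩, hbstar_mem⟩
    rw [hIoo] at this
    exact this
  exact ⟨m, hagree, hγm, hδm, by rw [← hceq, hastar_val], by rw [← hdeq, hbstar_val]⟩

lemma right_forcing (hq1 : 1 < q) (hk2 : 2 ≤ k)
    (h01 : piQ q (pat0 k) < piQ q (pat1 k))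
    {β' : ℕ → ℝ} (hβ : β' ∈ Sset k) {n : ℕ} (hβn : β' n = 1)
    (hb_eq : piQ q β' = pref q β' n + (1/q^n) * piQ q (pat1 k))
    {x : ℝ} {ξ : ℕ → ℝ} (hξ : ξ ∈ Sset k) (hxval : piQ q ξ = x)
    (hxb : piQ q β' ≤ x) (hxu : x ≤ piQ q (splice β' (n+1) (pat0 k))) :
    ∀ i, i < n+2 → ξ i = splice β' (n+1) (pat0 k) i := by
  have hk1 : 1 ≤ k := by omega
  set μ := splice β' (n+1) (pat0 k) with hμ
  have hμmem : μ ∈ Sset k := splice_mem0 hk2 hβ (n+1) (Or.inr ⟨by omega, by simpa using hβn⟩)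
  have hμi : ∀ i, i < n+1 → μ i = β' i := fun i hi => splice_lt hi
  have hμn : μ n = 1 := by rw [hμi n (by omega), hβn]
  have hμn1 : μ (n+1) = 0 := by
    rw [hμ, splice_ge (le_refl (n+1))]
    simp [pat0, Nat.sub_self, Nat.zero_mod]
  intro i
  induction i using Nat.strong_induction_on with
  | _ i IH =>
    intro hi
    have hpref : pref q ξ i = pref q μ i := pref_congr q (fun t ht => IH t ht (by omega))
    by_contra hne
    rcases Nat.lt_or_ge i n with hin | hin
    · -- i < n
      have hμiβ : μ i = β' i := hμi i (by omega)
      have hprefβ : pref q μ i = pref q β' i := pref_congr q (fun t ht => hμi t (by omega))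
      rcases hξ.1 i with hξ0 | hξ1
      · -- ξ i = 0 ; then β' i = 1 (else equal)
        have hβi : β' i = 1 := by
          by_contra hb1
          exact hne (by rw [hξ0, hμiβ, digit_eq_zero hβ.1 hb1])
        have h1 : x ≤ pref q ξ i + (1/q^i) * piQ q (pat0 k) := by
          rw [← hxval]; exact piQ_le_of_zero hq1 hk1 hξ hξ0
        have h2 : pref q β' i + (1/q^i) * piQ q (pat1 k) ≤ piQ q β' :=
          piQ_ge_of_one hq1 hk1 hβ hβi
        rw [hpref, hprefβ] at h1
        have hqi : (0:ℝ) < 1/q^i := by positivity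
        nlinarith
      · -- ξ i = 1 ; then β' i = 0
        have hβi : β' i = 0 := by
          by_contra hb1
          exact hne (by rw [hξ1, hμiβ, digit_eq_one hβ.1 hb1])
        have hμ0 : μ i = 0 := by rw [hμiβ, hβi]
        have h1 : pref q ξ i + (1/q^i) * piQ q (pat1 k) ≤ x := by
          rw [← hxval]; exact piQ_ge_of_one hq1 hk1 hξ hξ1
        have h2 : piQ q μ ≤ pref q μ i + (1/q^i) * piQ q (pat0 k) :=
          piQ_le_of_zero hq1 hk1 hμmem hμ0
        rw [hpref] at h1
        have hqi : (0:ℝ) < 1/q^i := by positivity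
        nlinarith
    · rcases Nat.lt_or_ge i (n+1) with hin1 | hin1
      · -- i = n
        have hieq : i = n := by omega
        subst hieq
        have hξ0 : ξ i = 0 := by
          rcases hξ.1 i with h' | h'
          · exact h'
          · exact absurd (by rw [h', hμn]) hne
        have h1 : x ≤ pref q ξ i + (1/q^i) * piQ q (pat0 k) := by
          rw [← hxval]; exact piQ_le_of_zero hq1 hk1 hξ hξ0
        have hprefβ : pref q μ i = pref q β' i := pref_congr q (fun t ht => hμi t (by omega))
        rw [hpref, hprefβ] at h1
        have hqi : (0:ℝ) < 1/q^i := by positivity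
        nlinarith
      · -- i = n+1
        have hieq : i = n+1 := by omega
        subst hieq
        have hξ1 : ξ (n+1) = 1 := by
          rcases hξ.1 (n+1) with h' | h'
          · exact absurd (by rw [h', hμn1]) hne
          · exact h'
        have h1 : pref q ξ (n+1) + (1/q^(n+1)) * piQ q (pat1 k) ≤ x := by
          rw [← hxval]; exact piQ_ge_of_one hq1 hk1 hξ hξ1
        have h2 : piQ q μ = pref q μ (n+1) + (1/q^(n+1)) * piQ q (pat0 k) := by
          rw [hμ, piQ_splice_eq hq1 hβ.1 pat0_digit (n+1)]
          congr 1
          exact (pref_congr q (fun t ht => (splice_lt ht).symm))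
        have hprefeq : pref q ξ (n+1) = pref q μ (n+1) :=
          pref_congr q (fun t ht => IH t ht (by omega))
        have hqi : (0:ℝ) < 1/q^(n+1) := by positivity
        nlinarith

lemma left_forcing (hq1 : 1 < q) (hk2 : 2 ≤ k)
    (h01 : piQ q (pat0 k) < piQ q (pat1 k))
    {α' : ℕ → ℝ} (hα : α' ∈ Sset k) {n : ℕ} (hαn : α' n = 0)
    (ha_eq : piQ q α' = pref q α' n + (1/q^n) * piQ q (pat0 k))
    {x : ℝ} {ξ : ℕ → ℝ} (hξ : ξ ∈ Sset k) (hxval : piQ q ξ = x)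
    (hxa : x ≤ piQ q α') (hxv : piQ q (splice α' (n+1) (pat1 k)) ≤ x) :
    ∀ i, i < n+2 → ξ i = splice α' (n+1) (pat1 k) i := by
  have hk1 : 1 ≤ k := by omega
  set ν := splice α' (n+1) (pat1 k) with hν
  have hνmem : ν ∈ Sset k := splice_mem1 hk2 hα (n+1) (Or.inr ⟨by omega, by simpa using hαn⟩)
  have hνi : ∀ i, i < n+1 → ν i = α' i := fun i hi => splice_lt hi
  have hνn : ν n = 0 := by rw [hνi n (by omega), hαn]
  have hνn1 : ν (n+1) = 1 := by
    rw [hν, splice_ge (le_refl (n+1))]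
    simp [pat1, Nat.sub_self, Nat.zero_mod]
  intro i
  induction i using Nat.strong_induction_on with
  | _ i IH =>
    intro hi
    have hpref : pref q ξ i = pref q ν i := pref_congr q (fun t ht => IH t ht (by omega))
    by_contra hne
    rcases Nat.lt_or_ge i n with hin | hin
    · have hνiα : ν i = α' i := hνi i (by omega)
      have hprefα : pref q ν i = pref q α' i := pref_congr q (fun t ht => hνi t (by omega))
      rcases hξ.1 i with hξ0 | hξ1
      · -- ξ i = 0, α' i = 1
        have hαi : α' i = 1 := by
          by_contra hb1
          exact hne (by rw [hξ0, hνiα, digit_eq_zero hα.1 hb1])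
        have hν1 : ν i = 1 := by rw [hνiα, hαi]
        have h1 : x ≤ pref q ξ i + (1/q^i) * piQ q (pat0 k) := by
          rw [← hxval]; exact piQ_le_of_zero hq1 hk1 hξ hξ0
        have h2 : pref q ν i + (1/q^i) * piQ q (pat1 k) ≤ piQ q ν :=
          piQ_ge_of_one hq1 hk1 hνmem hν1
        rw [hpref] at h1
        have hqi : (0:ℝ) < 1/q^i := by positivity
        nlinarith
      · -- ξ i = 1, α' i = 0
        have hαi : α' i = 0 := by
          by_contra hb1
          exact hne (by rw [hξ1, hνiα, digit_eq_one hα.1 hb1])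
        have h1 : pref q ξ i + (1/q^i) * piQ q (pat1 k) ≤ x := by
          rw [← hxval]; exact piQ_ge_of_one hq1 hk1 hξ hξ1
        have h2 : piQ q α' ≤ pref q α' i + (1/q^i) * piQ q (pat0 k) :=
          piQ_le_of_zero hq1 hk1 hα hαi
        rw [hpref, hprefα] at h1
        have hqi : (0:ℝ) < 1/q^i := by positivity
        nlinarith
    · rcases Nat.lt_or_ge i (n+1) with hin1 | hin1
      · -- i = n : ξ n must be 0
        have hieq : i = n := by omega
        subst hieq
        have hξ1 : ξ i = 1 := by
          rcases hξ.1 i with h' | h'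
          · exact absurd (by rw [h', hνn]) hne
          · exact h'
        have h1 : pref q ξ i + (1/q^i) * piQ q (pat1 k) ≤ x := by
          rw [← hxval]; exact piQ_ge_of_one hq1 hk1 hξ hξ1
        have hprefα : pref q ν i = pref q α' i := pref_congr q (fun t ht => hνi t (by omega))
        rw [hpref, hprefα] at h1
        have hqi : (0:ℝ) < 1/q^i := by positivity
        nlinarith
      · -- i = n+1 : ξ (n+1) must be 1
        have hieq : i = n+1 := by omega
        subst hieq
        have hξ0 : ξ (n+1) = 0 := by
          rcases hξ.1 (n+1) with h' | h'
          · exact h'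
          · exact absurd (by rw [h', hνn1]) hne
        have h1 : x ≤ pref q ξ (n+1) + (1/q^(n+1)) * piQ q (pat0 k) := by
          rw [← hxval]; exact piQ_le_of_zero hq1 hk1 hξ hξ0
        have h2 : piQ q ν = pref q ν (n+1) + (1/q^(n+1)) * piQ q (pat1 k) := by
          rw [hν, piQ_splice_eq hq1 hα.1 pat1_digit (n+1)]
          congr 1
          exact (pref_congr q (fun t ht => (splice_lt ht).symm))
        have hprefeq : pref q ξ (n+1) = pref q ν (n+1) :=
          pref_congr q (fun t ht => IH t ht (by omega))
        have hqi : (0:ℝ) < 1/q^(n+1) := by positivity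
        nlinarith

lemma key_sum_lt {qk q : ℝ} (k : ℕ) (hk : 1 ≤ k) (hqk1 : 1 < qk)
    (hbon : qk ^ k = ∑ i ∈ range k, qk ^ i) (hlt : qk < q) :
    ∑ i ∈ range k, q ^ i < q ^ k := by
  have hq1 : 1 < q := lt_trans hqk1 hlt
  have hqk0 : 0 < qk := lt_trans one_pos hqk1
  have hq0 : 0 < q := lt_trans one_pos hq1
  have hterm : ∀ i ∈ range k, qk ^ k * q ^ i ≤ q ^ k * qk ^ i := by
    intro i hi
    have hik : i < k := mem_range.1 hi
    have e1 : qk ^ k = qk ^ (k - i) * qk ^ i := by rw [← pow_add]; congr 1; omega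
    have e2 : q ^ k = q ^ (k - i) * q ^ i := by rw [← pow_add]; congr 1; omega
    rw [e1, e2]
    have h3 : qk ^ (k - i) ≤ q ^ (k - i) := pow_le_pow_left₀ hqk0.le hlt.le _
    have : qk ^ (k-i) * qk ^ i * q ^ i ≤ q ^ (k-i) * qk ^ i * q ^ i := by
      apply mul_le_mul_of_nonneg_right (mul_le_mul_of_nonneg_right h3 (by positivity)) (by positivity)
    calc qk ^ (k-i) * qk ^ i * q ^ i = qk ^ (k-i) * qk ^ i * q ^ i := rfl
      _ ≤ q ^ (k-i) * qk ^ i * q ^ i := this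
      _ = q ^ (k-i) * q ^ i * qk ^ i := by ring
  have hstrict : ∃ i ∈ range k, qk ^ k * q ^ i < q ^ k * qk ^ i := by
    refine ⟨0, mem_range.2 (by omega), ?_⟩
    simp only [pow_zero, mul_one]
    exact pow_lt_pow_left₀ hlt hqk0.le (by omega)
  have hsum : ∑ i ∈ range k, qk ^ k * q ^ i < ∑ i ∈ range k, q ^ k * qk ^ i := by
    obtain ⟨i0, hi0, hi0'⟩ := hstrict
    exact Finset.sum_lt_sum hterm ⟨i0, hi0, hi0'⟩
  rw [← Finset.mul_sum, ← Finset.mul_sum, ← hbon] at hsum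
  -- hsum : qk^k * Σ q^i < q^k * qk^k
  have hqkk : 0 < qk ^ k := by positivity
  have := (mul_lt_mul_iff_of_pos_left hqkk).1 (by linarith [hsum] : qk ^ k * (∑ i ∈ range k, q ^ i) < qk ^ k * q ^ k)
  exact this

lemma numeric_main {q : ℝ} (j : ℕ) (h1 : 1 < q) (h2 : q < 2) {e : ℝ}
    (he : e * ((q ^ (j+4) - 1) * q) = q ^ (j+4))
    (hKey : ∑ i ∈ range (j+4), q ^ i < q ^ (j+4)) :
    0 < e - (1/(q-1) - e) ∧ 0 < q * (1/(q-1) - e) - e ∧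
      q ^ (j+1) * (q * (e - (1/(q-1) - e))) < q * (1/(q-1) - e) - e := by
  have hq0 : 0 < q := lt_trans one_pos h1
  set E := q ^ (j+4) with hE
  have hE1 : 1 < E := one_lt_pow₀ h1 (by omega)
  have hE0 : 0 < E - 1 := by linarith
  have hq1 : 0 < q - 1 := by linarith
  -- F2 : q + 1 < q^2
  have hpair : q ^ (j+2) + q ^ (j+3) ≤ ∑ i ∈ range (j+4), q ^ i := by
    have hsub : ({j+2, j+3} : Finset ℕ) ⊆ range (j+4) := by
      intro x hx
      simp only [Finset.mem_insert, Finset.mem_singleton] at hx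
      rcases hx with rfl | rfl <;> simp [Finset.mem_range] <;> omega
    have := Finset.sum_le_sum_of_subset_of_nonneg (f := fun i => q ^ i) hsub
      (fun i _ _ => by positivity)
    rwa [Finset.sum_pair (by omega : j+2 ≠ j+3)] at this
  have hF2 : q + 1 < q ^ 2 := by
    have h3 : q ^ (j+2) * (1 + q) < q ^ (j+2) * q ^ 2 := by
      have e1 : q ^ (j+2) * (1 + q) = q ^ (j+2) + q ^ (j+3) := by ring
      have e2 : q ^ (j+2) * q ^ 2 = q ^ (j+4) := by rw [← pow_add]
      rw [e1, e2]
      exact lt_of_le_of_lt hpair hKey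
    have := (mul_lt_mul_iff_of_pos_left (by positivity : (0:ℝ) < q ^ (j+2))).1 h3
    linarith
  -- hphi : q*E + 1 > 2*E
  have hgeom : (∑ i ∈ range (j+4), q ^ i) * (q - 1) = E - 1 := geom_sum_mul q (j+4)
  have hphi : 2 * E < q * E + 1 := by
    have : E - 1 < E * (q - 1) := by
      rw [← hgeom]
      exact mul_lt_mul_of_pos_right hKey hq1
    nlinarith
  -- explicit e
  have hden : (E - 1) * q ≠ 0 := by positivity
  have he' : e = E / ((E - 1) * q) := by
    field_simp at he ⊢
    linarith [he]
  set s : ℝ := 1/(q-1) with hs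
  have hd_eq : e - (s - e) = (q*E - 2*E + q) / ((E-1)*q*(q-1)) := by
    rw [he', hs]
    field_simp
    ring
  have ht_eq : q * (s - e) - e = (E - q^2) / ((E-1)*q*(q-1)) := by
    rw [he', hs]
    field_simp
    ring
  have hdenpos : (0:ℝ) < (E-1)*q*(q-1) := by positivity
  have hEq2 : q ^ 2 < E := by
    have : q ^ 2 < q ^ (j+4) := pow_lt_pow_right₀ h1 (by omega)
    rwa [← hE] at this
  refine ⟨?_, ?_, ?_⟩
  · rw [hd_eq]
    apply div_pos ?_ hdenpos
    nlinarith
  · rw [ht_eq]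
    apply div_pos ?_ hdenpos
    linarith
  · rw [hd_eq, ht_eq]
    have hrw : q ^ (j+1) * (q * ((q*E - 2*E + q) / ((E-1)*q*(q-1))))
        = (q ^ (j+1) * q * (q*E - 2*E + q)) / ((E-1)*q*(q-1)) := by ring
    rw [hrw, div_lt_div_iff_of_pos_right hdenpos]
    set g := q ^ (j+1) with hg
    have hgq : q ≤ g := by
      rw [hg]
      calc q = q ^ 1 := (pow_one q).symm
        _ ≤ q ^ (j+1) := pow_le_pow_right₀ h1.le (by omega)
    have hgpos : 0 < g := lt_of_lt_of_le hq0 hgq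
    have hEg : E = g * q ^ 3 := by rw [hE, hg, ← pow_add]
    rw [hEg]
    have hB : 0 < g * (q - 1) - 1 := by
      have h4 : q * (q - 1) ≤ g * (q - 1) := mul_le_mul_of_nonneg_right hgq hq1.le
      nlinarith
    have t1 : 0 < q ^ 2 * (g * (q - 1) - 1) := mul_pos (by positivity) hB
    have t2 : 0 < (g * q ^ 2) ^ 2 * (2 - q) := mul_pos (by positivity) (by linarith)
    nlinarith [t1, t2]

set_option maxHeartbeats 1000000 in
lemma per_gap (hq1 : 1 < q) (hk4 : 4 ≤ k)
    (h01 : piQ q (pat0 k) < piQ q (pat1 k))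
    {a b : ℝ} (hgap : IsGap (piQ q '' Sset k) a b) :
    ∃ n : ℕ,
      b - a = (1/q^n) * (piQ q (pat1 k) - piQ q (pat0 k)) ∧
      leftBridgeStart (piQ q '' Sset k) a b
        ≤ a - (1/q^(n+1)) * (q * piQ q (pat0 k) - piQ q (pat1 k)) ∧
      b + (1/q^(n+1)) * (q * piQ q (pat0 k) - piQ q (pat1 k))
        ≤ rightBridgeEnd (piQ q '' Sset k) a b := by
  have hk2 : 2 ≤ k := by omega
  have hk1 : 1 ≤ k := by omega
  have hq0 : 0 < q := lt_trans one_pos hq1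
  set η0 := piQ q (pat0 k) with hη0
  set η1 := piQ q (pat1 k) with hη1
  have hδpos : 0 < η1 - η0 := by linarith
  have hsum01 : η0 + η1 = 1 / (q - 1) := piQ_pat0_add hq1 hk1
  have hprod : (q - 1) * (η0 + η1) = 1 := by
    rw [hsum01, mul_one_div, div_self (by linarith : q - 1 ≠ 0)]
  have hθeq : 1 + η0 - q*η1 = q*η0 - η1 := by linear_combination -hprod
  have hBB : BddBelow (piQ q '' Sset k) := by
    refine ⟨0, fun x hx => ?_⟩
    obtain ⟨σ, hσ, rfl⟩ := hx
    exact piQ_nonneg hq1 hσ.1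
  have hBA : BddAbove (piQ q '' Sset k) := by
    refine ⟨1/(q-1), fun x hx => ?_⟩
    obtain ⟨σ, hσ, rfl⟩ := hx
    exact piQ_le_hull hq1 hσ.1
  obtain ⟨α', hα, haval⟩ := hgap.2.1
  obtain ⟨β', hβ, hbval⟩ := hgap.2.2.1
  obtain ⟨n, hag, hα0, hβ1, haeq, hbeq⟩ := gap_classify hq1 hk2 h01 hgap hα hβ haval hbval
  have hprefβ : pref q α' n = pref q β' n := pref_congr q hag
  have ha_eq : piQ q α' = pref q α' n + (1/q^n) * η0 := by rw [haval, haeq]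
  have hb_eq : piQ q β' = pref q β' n + (1/q^n) * η1 := by rw [hbval, hbeq, hprefβ]
  have hbeq' : b = pref q β' n + (1/q^n) * η1 := by rw [hbeq, hprefβ]
  refine ⟨n, by rw [haeq, hbeq]; ring, ?_, ?_⟩
  · -- LEFT side
    set v := piQ q (splice α' (n+1) (pat1 k)) with hv
    have hvmem : v ∈ piQ q '' Sset k :=
      ⟨_, splice_mem1 hk2 hα (n+1) (Or.inr ⟨by omega, by simpa using hα0⟩), rfl⟩
    have hv_val : v = pref q α' n + (1/q^(n+1)) * η1 := by
      rw [hv, piQ_splice_eq hq1 hα.1 pat1_digit (n+1), pref_succ, hα0]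
      simp
      exact Or.inl rfl
    have hqq : (1:ℝ)/q^n = q * (1/q^(n+1)) := by
      rw [pow_succ]
      field_simp
    have hva : v = a - (1/q^(n+1)) * (q*η0 - η1) := by
      rw [hv_val, haeq, hqq]
      ring
    rw [← hva]
    apply csSup_le ⟨sInf (piQ q '' Sset k), Or.inl rfl⟩
    rintro y (hy | ⟨c'', hg'', hda, hlen⟩)
    · simp only [Set.mem_singleton_iff] at hy
      rw [hy]
      exact csInf_le hBB hvmem
    · by_contra hcon
      push_neg at hcon
      have hvc : v ≤ c'' := by
        by_contra hvc'
        push_neg at hvc'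
        have : v ∈ Set.Ioo c'' y ∩ (piQ q '' Sset k) := ⟨⟨hvc', hcon⟩, hvmem⟩
        rw [hg''.2.2.2] at this
        exact this
      obtain ⟨γc, hγc, hγcval⟩ := hg''.2.1
      obtain ⟨γd, hγd, hγdval⟩ := hg''.2.2.1
      have hca : c'' ≤ a := le_trans (le_of_lt hg''.1) hda
      have fc := left_forcing hq1 hk2 h01 hα hα0 ha_eq hγc hγcval
        (by rw [haval]; exact hca) hvc
      have fd := left_forcing hq1 hk2 h01 hα hα0 ha_eq hγd hγdval
        (by rw [haval]; exact hda) (le_trans hvc (le_of_lt hg''.1))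
      obtain ⟨m, hagm, hm0, hm1, hceq'', hdeq''⟩ :=
        gap_classify hq1 hk2 h01 hg'' hγc hγd hγcval hγdval
      have hmge : n + 2 ≤ m := by
        by_contra hm
        push_neg at hm
        have e1 := fc m hm
        have e2 := fd m hm
        rw [hm0] at e1
        rw [hm1] at e2
        rw [← e1] at e2
        norm_num at e2
      have hlen'' : y - c'' = (1/q^m) * (η1 - η0) := by rw [hceq'', hdeq'']; ring
      have hban : b - a = (1/q^n) * (η1 - η0) := by rw [haeq, hbeq]; ring
      have hle2 : (1:ℝ)/q^m ≤ 1/q^(n+2) :=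
        div_le_div_of_nonneg_left one_pos.le (by positivity) (pow_le_pow_right₀ hq1.le hmge)
      have hlt2 : (1:ℝ)/q^(n+2) < 1/q^n :=
        div_lt_div_of_pos_left one_pos (by positivity) (pow_lt_pow_right₀ hq1 (by omega))
      rw [hlen'', hban] at hlen
      nlinarith
  · -- RIGHT side
    set u := piQ q (splice β' (n+1) (pat0 k)) with hu
    have humem : u ∈ piQ q '' Sset k :=
      ⟨_, splice_mem0 hk2 hβ (n+1) (Or.inr ⟨by omega, by simpa using hβ1⟩), rfl⟩
    have hqq : (1:ℝ)/q^n = q * (1/q^(n+1)) := by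
      rw [pow_succ]
      field_simp
    have hu_val : u = pref q β' n + 1/q^(n+1) + (1/q^(n+1)) * η0 := by
      rw [hu, piQ_splice_eq hq1 hβ.1 pat0_digit (n+1), pref_succ, hβ1]
    have hub : u = b + (1/q^(n+1)) * (q*η0 - η1) := by
      rw [hu_val, hbeq', ← hθeq, hqq]
      ring
    rw [← hub]
    apply le_csInf ⟨sSup (piQ q '' Sset k), Or.inl rfl⟩
    rintro y (hy | ⟨d'', hg'', hbc, hlen⟩)
    · simp only [Set.mem_singleton_iff] at hy
      rw [hy]
      exact le_csSup hBA humem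
    · by_contra hcon
      push_neg at hcon
      have hud : d'' ≤ u := by
        by_contra hud'
        push_neg at hud'
        have : u ∈ Set.Ioo y d'' ∩ (piQ q '' Sset k) := ⟨⟨hcon, hud'⟩, humem⟩
        rw [hg''.2.2.2] at this
        exact this
      obtain ⟨γc, hγc, hγcval⟩ := hg''.2.1
      obtain ⟨γd, hγd, hγdval⟩ := hg''.2.2.1
      have fc := right_forcing hq1 hk2 h01 hβ hβ1 hb_eq hγc hγcval
        (by rw [hbval]; exact hbc) (le_trans (le_of_lt hg''.1) hud)
      have fd := right_forcing hq1 hk2 h01 hβ hβ1 hb_eq hγd hγdval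
        (by rw [hbval]; exact le_trans hbc (le_of_lt hg''.1)) hud
      obtain ⟨m, hagm, hm0, hm1, hceq'', hdeq''⟩ :=
        gap_classify hq1 hk2 h01 hg'' hγc hγd hγcval hγdval
      have hmge : n + 2 ≤ m := by
        by_contra hm
        push_neg at hm
        have e1 := fc m hm
        have e2 := fd m hm
        rw [hm0] at e1
        rw [hm1] at e2
        rw [← e1] at e2
        norm_num at e2
      have hlen'' : d'' - y = (1/q^m) * (η1 - η0) := by rw [hceq'', hdeq'']; ring
      have hban : b - a = (1/q^n) * (η1 - η0) := by rw [haeq, hbeq]; ring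
      have hle2 : (1:ℝ)/q^m ≤ 1/q^(n+2) :=
        div_le_div_of_nonneg_left one_pos.le (by positivity) (pow_le_pow_right₀ hq1.le hmge)
      have hlt2 : (1:ℝ)/q^(n+2) < 1/q^n :=
        div_lt_div_of_pos_left one_pos (by positivity) (pow_lt_pow_right₀ hq1 (by omega))
      rw [hlen'', hban] at hlen
      nlinarith

end ThickAux

theorem thickness_proj_Sk
    (k : ℕ) (hk : 4 ≤ k) (qk : ℝ) (hqk : IsBonacci k qk)
    (q : ℝ) (hq : q ∈ Set.Ioo qk 2) :
    ENNReal.ofReal (q ^ ((k : ℤ) - 3)) < thickness (piQ q '' Sset k) := by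
  obtain ⟨j, rfl⟩ : ∃ j, k = j + 4 := ⟨k - 4, by omega⟩
  obtain ⟨⟨hqk1, hqk2⟩, hbon⟩ := hqk
  obtain ⟨hq1', hq2⟩ := hq
  have hq1 : 1 < q := lt_trans hqk1 hq1'
  have hq0 : 0 < q := lt_trans one_pos hq1
  have hKey := ThickAux.key_sum_lt (j+4) (by omega) hqk1 hbon hq1'
  have he := ThickAux.piQ_pat1 (k := j+4) hq1 (by omega)
  have hsum01 := ThickAux.piQ_pat0_add (k := j+4) hq1 (by omega)
  set η0 := piQ q (ThickAux.pat0 (j+4)) with hη0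
  set η1 := piQ q (ThickAux.pat1 (j+4)) with hη1
  obtain ⟨hd', ht', hm'⟩ := ThickAux.numeric_main j hq1 hq2 he hKey
  have hη0eq : 1/(q-1) - η1 = η0 := by linarith
  rw [hη0eq] at hd' ht' hm'
  have h01 : η0 < η1 := by linarith
  have hθpos : 0 < q*η0 - η1 := ht'
  have hδpos : 0 < η1 - η0 := hd'
  have hτden : 0 < q * (η1 - η0) := mul_pos hq0 hδpos
  set τ := (q*η0 - η1) / (q * (η1 - η0)) with hτ
  have hτpos : 0 < τ := div_pos hθpos hτden
  have hτgt : q^(j+1) < τ := (lt_div_iff₀ hτden).2 (by linarith [hm'])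
  have hzpow : (q : ℝ) ^ ((((j+4:ℕ)) : ℤ) - 3) = q ^ (j+1) := by
    have h : (((j+4:ℕ)) : ℤ) - 3 = ((j+1 : ℕ) : ℤ) := by push_cast; ring
    rw [h, zpow_natCast]
  rw [hzpow]
  have hthick : ENNReal.ofReal τ ≤ thickness (piQ q '' Sset (j+4)) := by
    apply le_iInf
    rintro ⟨⟨a, b⟩, hgap⟩
    apply ENNReal.ofReal_le_ofReal
    obtain ⟨n, hba, hL, hR⟩ := ThickAux.per_gap hq1 (by omega) h01 hgap
    have hbapos : 0 < b - a := sub_pos.2 hgap.1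
    have hδne : η1 - η0 ≠ 0 := ne_of_gt hδpos
    have hτeq : τ * (b - a) = (1/q^(n+1)) * (q*η0 - η1) := by
      rw [hτ, hba, pow_succ]
      field_simp
      ring
    apply le_min
    · rw [le_div_iff₀ hbapos, hτeq]
      linarith [hL]
    · rw [le_div_iff₀ hbapos, hτeq]
      linarith [hR]
  calc ENNReal.ofReal (q^(j+1)) < ENNReal.ofReal τ := by
        rw [ENNReal.ofReal_lt_ofReal_iff hτpos]; exact hτgt
    _ ≤ _ := hthick
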